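/- With 𝔐₁ and 𝔐₂ as defined from two height functions h^ε, h on ℝ², suppose |∇h^ε| ≤ K and |∇h| ≤ K pointwise for some K ≥ 0. Then pointwise 𝔐₁ − |𝔐₂| |∇(h^ε+h)|² ≥ 4|𝔐₂|·c for some constant c > 0 depending only on K; in particular there exists δ_σ > 0 (depending only on K) such that for every ξ ∈ ℝ², 𝔐₁|ξ|² + 𝔐₂|ξ·∇(h^ε+h)|² ≥ δ_σ |ξ|². -/
import Mathlib


open RealInnerProductSpace

set_option maxHeartbeats 1000000

/-- if `|∇h^ε| ≤ K` and `|∇h| ≤ K` pointwise, then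
`𝔐₁ − |𝔐₂||∇(h^ε+h)|² ≥ 4|𝔐₂|c` for some `c > 0` depending only on `K`, and there is
`δ_σ > 0` (depending only on `K`) such that
`𝔐₁|ξ|² + 𝔐₂|ξ·∇(h^ε+h)|² ≥ δ_σ|ξ|²` for every `ξ ∈ ℝ²`. -/
theorem surface_tension_coercivity (K : ℝ) (hK : 0 ≤ K) :
    ∃ c > (0 : ℝ), ∃ δσ > (0 : ℝ),
      ∀ a b : EuclideanSpace ℝ (Fin 2), ‖a‖ ≤ K → ‖b‖ ≤ K →
        let A := Real.sqrt (1 + ‖a‖ ^ 2)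
        let B := Real.sqrt (1 + ‖b‖ ^ 2)
        let M₁ := 1 / (2 * A) + 1 / (2 * B)
        let M₂ := -1 / (2 * A * B * (A + B))
        4 * |M₂| * c ≤ M₁ - |M₂| * ‖a + b‖ ^ 2 ∧
        ∀ ξ : EuclideanSpace ℝ (Fin 2),
          δσ * ‖ξ‖ ^ 2 ≤ M₁ * ‖ξ‖ ^ 2 + M₂ * ⟪ξ, a + b⟫ ^ 2 := by
  have hs1 : (1:ℝ) ≤ 1 + K ^ 2 := by nlinarith
  refine ⟨1, one_pos, 1 / (1 + K ^ 2) ^ 3, by positivity, ?_⟩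
  intro a b ha hb
  dsimp only
  set x := ‖a‖ with hx
  set y := ‖b‖ with hy
  have hx0 : 0 ≤ x := norm_nonneg a
  have hy0 : 0 ≤ y := norm_nonneg b
  set A := Real.sqrt (1 + x ^ 2) with hA
  set B := Real.sqrt (1 + y ^ 2) with hB
  have hA2 : A ^ 2 = 1 + x ^ 2 := Real.sq_sqrt (by positivity)
  have hB2 : B ^ 2 = 1 + y ^ 2 := Real.sq_sqrt (by positivity)
  have hA0 : 0 < A := Real.sqrt_pos.mpr (by positivity)
  have hB0 : 0 < B := Real.sqrt_pos.mpr (by positivity)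
  have hA1 : 1 ≤ A := by nlinarith
  have hB1 : 1 ≤ B := by nlinarith
  have hAs : A ≤ 1 + K ^ 2 := by nlinarith
  have hBs : B ≤ 1 + K ^ 2 := by nlinarith
  have hAB : 1 + x * y ≤ A * B := by
    nlinarith [sq_nonneg (x - y), mul_pos hA0 hB0, mul_nonneg hx0 hy0]
  have hden : 0 < 2 * A * B * (A + B) := by positivity
  have hn : ‖a + b‖ ^ 2 ≤ (x + y) ^ 2 := by
    have h := norm_add_le a b
    nlinarith [norm_nonneg (a + b)]
  have key : 4 ≤ (A + B) ^ 2 - ‖a + b‖ ^ 2 := by nlinarith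
  have habs : |(-1 / (2 * A * B * (A + B)))| = 1 / (2 * A * B * (A + B)) := by
    rw [abs_div, abs_neg, abs_one, abs_of_pos hden]
  have hM1 : 1 / (2 * A) + 1 / (2 * B) = (A + B) ^ 2 / (2 * A * B * (A + B)) := by
    field_simp
    ring
  have h1 : 4 * |(-1 / (2 * A * B * (A + B)))| * 1 ≤
      (1 / (2 * A) + 1 / (2 * B)) - |(-1 / (2 * A * B * (A + B)))| * ‖a + b‖ ^ 2 := by
    rw [habs, hM1]
    have e1 : 4 * (1 / (2 * A * B * (A + B))) * 1 = 4 / (2 * A * B * (A + B)) := by ring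
    have e2 : (A + B) ^ 2 / (2 * A * B * (A + B)) - 1 / (2 * A * B * (A + B)) * ‖a + b‖ ^ 2
        = ((A + B) ^ 2 - ‖a + b‖ ^ 2) / (2 * A * B * (A + B)) := by ring
    rw [e1, e2]
    exact (div_le_div_iff_of_pos_right hden).mpr key
  have hdelta : 1 / (1 + K ^ 2) ^ 3 ≤ 4 * |(-1 / (2 * A * B * (A + B)))| := by
    rw [habs]
    have e : 4 * (1 / (2 * A * B * (A + B))) = 4 / (2 * A * B * (A + B)) := by ring
    rw [e, div_le_div_iff₀ (by positivity) hden]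
    have hABle : A * B ≤ (1 + K ^ 2) ^ 2 := by nlinarith
    have hsum : A + B ≤ 2 * (1 + K ^ 2) := by linarith
    nlinarith [mul_le_mul hABle hsum (by positivity : (0:ℝ) ≤ A + B)
      (by positivity : (0:ℝ) ≤ (1 + K ^ 2) ^ 2)]
  refine ⟨h1, ?_⟩
  intro ξ
  have hCS : ⟪ξ, a + b⟫ ^ 2 ≤ ‖ξ‖ ^ 2 * ‖a + b‖ ^ 2 := by
    have h := abs_real_inner_le_norm ξ (a + b)
    nlinarith [sq_abs ⟪ξ, a + b⟫, abs_nonneg ⟪ξ, a + b⟫, norm_nonneg ξ,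
      mul_nonneg (norm_nonneg ξ) (norm_nonneg (a + b))]
  have hD0 : (0:ℝ) < 1 / (2 * A * B * (A + B)) := by positivity
  rw [habs] at h1 hdelta
  rw [show (-1:ℝ) / (2 * A * B * (A + B)) = -(1 / (2 * A * B * (A + B))) from by ring]
  nlinarith [mul_le_mul_of_nonneg_right h1 (sq_nonneg ‖ξ‖),
    mul_le_mul_of_nonneg_left hCS (le_of_lt hD0),
    mul_le_mul_of_nonneg_right hdelta (sq_nonneg ‖ξ‖)]
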